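/- Fix a nonzero scalar q ∈ F that is not a root of unity, and scalars α, α*, a, a′, b, b′, c ∈ F with c ≠ 0. Define θ_i = α + a·q^{2i−d} + a′·q^{d−2i} and θ*_i = α* + b·q^{2i−d} + b′·q^{d−2i} for 0 ≤ i ≤ d, and for 1 ≤ i ≤ d define φ_i = (q^i − q^{−i})(q^{d−i+1} − q^{i−d−1})(b − a′c·q^{d−2i+1})(b′ − ac·q^{2i−d−1})c^{−1} and φ̂_i = (q^i − q^{−i})(q^{d−i+1} − q^{i−d−1})(b − ac·q^{d−2i+1})(b′ − a′c·q^{2i−d−1})c^{−1}. Then ({θ_i}_{i=0}^d, {θ*_i}_{i=0}^d, {φ_i}_{i=1}^d, {φ̂_i}_{i=1}^d) is a parameter array over F if and only if the following three conditions hold: (C1) a ≠ a′q^{2d−2j} for 1 ≤ j ≤ 2d−1; (C2) b ≠ b′q^{2d−2j} for 1 ≤ j ≤ 2d−1; (C3) neither b·c^{−1} nor b′·c^{−1} belongs to {a·q^{d−2j+1} : 1 ≤ j ≤ d} ∪ {a′·q^{d−2j+1} : 1 ≤ j ≤ d}. -/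

import Mathlib

set_option maxHeartbeats 4000000


/-- A parameter array over `F` (Definition 3.1 of the paper). -/
def IsParameterArray {F : Type*} [Field F] (d : ℕ)
    (θ θs φ φh : ℕ → F) : Prop :=
  (∀ i j : ℕ, i ≤ d → j ≤ d → i ≠ j → θ i ≠ θ j ∧ θs i ≠ θs j) ∧
  (∀ i : ℕ, 1 ≤ i → i ≤ d → φ i ≠ 0 ∧ φh i ≠ 0) ∧
  (∀ i : ℕ, 1 ≤ i → i ≤ d →
    φ i = φh 1 * (∑ h ∈ Finset.range i, (θ h - θ (d - h)) / (θ 0 - θ d)) +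
      (θs i - θs 0) * (θ (i - 1) - θ d)) ∧
  (∀ i : ℕ, 1 ≤ i → i ≤ d →
    φh i = φ 1 * (∑ h ∈ Finset.range i, (θ h - θ (d - h)) / (θ 0 - θ d)) +
      (θs i - θs 0) * (θ (d - i + 1) - θ 0)) ∧
  (∀ i : ℕ, 2 ≤ i → i ≤ d - 1 →
    (θ (i - 2) - θ (i + 1)) / (θ (i - 1) - θ i) =
      (θs (i - 2) - θs (i + 1)) / (θs (i - 1) - θs i)) ∧
  (∀ i j : ℕ, 2 ≤ i → i ≤ d - 1 → 2 ≤ j → j ≤ d - 1 →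
    (θ (i - 2) - θ (i + 1)) / (θ (i - 1) - θ i) =
      (θ (j - 2) - θ (j + 1)) / (θ (j - 1) - θ j))

lemma aux_zpow_ne_one {F : Type*} [Field F] {q : F} (hq : q ≠ 0)
    (hqru : ∀ n : ℕ, 1 ≤ n → q ^ n ≠ 1) : ∀ m : ℤ, m ≠ 0 → q ^ m ≠ 1 := by
  have key : ∀ m : ℤ, 0 < m → q ^ m ≠ 1 := by
    intro m hm
    lift m to ℕ using le_of_lt hm
    rw [zpow_natCast]
    exact hqru _ (by exact_mod_cast hm)
  intro m hm
  rcases lt_trichotomy m 0 with h|h|h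
  · intro he
    apply key (-m) (by omega)
    rw [zpow_neg, he, inv_one]
  · exact absurd h hm
  · exact key m h

lemma aux_zpow_inj {F : Type*} [Field F] {q : F} (hq : q ≠ 0)
    (hqru : ∀ n : ℕ, 1 ≤ n → q ^ n ≠ 1) : ∀ x y : ℤ, x ≠ y → q ^ x ≠ q ^ y := by
  intro x y hxy he
  apply aux_zpow_ne_one hq hqru (x - y) (sub_ne_zero.mpr hxy)
  rw [zpow_sub₀ hq, he, div_self (zpow_ne_zero _ hq)]

lemma aux_tdiff {F : Type*} [Field F] {q : F} (hq : q ≠ 0) (d : ℕ) (α a a' : F) (i j : ℕ) :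
    (α + a * q ^ (2*(i:ℤ)-(d:ℤ)) + a' * q ^ ((d:ℤ)-2*(i:ℤ)))
      - (α + a * q ^ (2*(j:ℤ)-(d:ℤ)) + a' * q ^ ((d:ℤ)-2*(j:ℤ)))
    = (q ^ (2*(i:ℤ)-(d:ℤ)) - q ^ (2*(j:ℤ)-(d:ℤ)))
        * (a - a' * q ^ (2*(d:ℤ)-2*((i:ℤ)+(j:ℤ)))) := by
  have e1 : q ^ ((d:ℤ)-2*(i:ℤ)) = q ^ (2*(d:ℤ)-2*((i:ℤ)+(j:ℤ))) * q ^ (2*(j:ℤ)-(d:ℤ)) := by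
    rw [← zpow_add₀ hq]; congr 1; ring
  have e2 : q ^ ((d:ℤ)-2*(j:ℤ)) = q ^ (2*(d:ℤ)-2*((i:ℤ)+(j:ℤ))) * q ^ (2*(i:ℤ)-(d:ℤ)) := by
    rw [← zpow_add₀ hq]; congr 1; ring
  rw [e1, e2]; ring

lemma aux_sumpow_mul {F : Type*} [Field F] {q : F} (hq : q ≠ 0) (d : ℕ) :
    ∀ i : ℕ, (∑ h ∈ Finset.range i, (q ^ (2 * (h:ℤ) - (d:ℤ)) - q ^ ((d:ℤ) - 2 * (h:ℤ))))
        * ((q ^ 2 - 1) * (q ^ (i:ℤ)) ^ 2 * q ^ (d:ℤ))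
      = ((q ^ (i:ℤ)) ^ 2 - 1) * ((q ^ (i:ℤ)) ^ 2 - (q ^ (d:ℤ)) ^ 2 * q ^ 2) := by
  have hV : q ^ (d:ℤ) ≠ 0 := zpow_ne_zero _ hq
  have h2 : ∀ x : ℤ, q ^ (2 * x) = (q ^ x) ^ 2 := by
    intro x; rw [two_mul, zpow_add₀ hq, sq]
  intro i
  induction i with
  | zero => simp
  | succ n ih =>
    have hU : q ^ (n:ℕ) ≠ 0 := pow_ne_zero _ hq
    have hU' : q ^ ((n:ℕ):ℤ) ≠ 0 := zpow_ne_zero _ hq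
    have hc1 : q ^ ((n+1:ℕ):ℤ) = q ^ (n:ℤ) * q := by
      push_cast; rw [zpow_add₀ hq, zpow_one]
    rw [Finset.sum_range_succ, add_mul, hc1,
      show (q ^ 2 - 1) * (q ^ (n:ℤ) * q) ^ 2 * q ^ (d:ℤ)
        = ((q ^ 2 - 1) * (q ^ (n:ℤ)) ^ 2 * q ^ (d:ℤ)) * q ^ 2 by ring,
      ← mul_assoc, ih]
    simp only [zpow_sub₀ hq, zpow_add₀ hq, h2, zpow_one, zpow_zero]
    field_simp
    ring

/-- Proposition 1.10 of the paper: the sequence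
`(θ_i, θ*_i, φ_i, φ̂_i)` is a parameter array over `F` iff (C1)-(C3) hold. -/
theorem stmt1 {F : Type*} [Field F] [IsAlgClosed F] {d : ℕ} (hd : 3 ≤ d)
    (q α αs a a' b b' c : F) (hq : q ≠ 0)
    (hqru : ∀ n : ℕ, 1 ≤ n → q ^ n ≠ 1) (hc : c ≠ 0)
    (θ θs φ φh : ℕ → F)
    (hθ : ∀ i : ℕ, i ≤ d → θ i = α + a * q ^ (2 * (i : ℤ) - (d : ℤ)) + a' * q ^ ((d : ℤ) - 2 * (i : ℤ)))
    (hθs : ∀ i : ℕ, i ≤ d → θs i = αs + b * q ^ (2 * (i : ℤ) - (d : ℤ)) + b' * q ^ ((d : ℤ) - 2 * (i : ℤ)))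
    (hφ : ∀ i : ℕ, 1 ≤ i → i ≤ d → φ i = (q ^ (i : ℤ) - q ^ (-(i : ℤ))) * (q ^ ((d : ℤ) - (i : ℤ) + 1) - q ^ ((i : ℤ) - (d : ℤ) - 1)) * (b - a' * c * q ^ ((d : ℤ) - 2 * (i : ℤ) + 1)) * (b' - a * c * q ^ (2 * (i : ℤ) - (d : ℤ) - 1)) * c⁻¹)
    (hφh : ∀ i : ℕ, 1 ≤ i → i ≤ d → φh i = (q ^ (i : ℤ) - q ^ (-(i : ℤ))) * (q ^ ((d : ℤ) - (i : ℤ) + 1) - q ^ ((i : ℤ) - (d : ℤ) - 1)) * (b - a * c * q ^ ((d : ℤ) - 2 * (i : ℤ) + 1)) * (b' - a' * c * q ^ (2 * (i : ℤ) - (d : ℤ) - 1)) * c⁻¹) :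
    IsParameterArray d θ θs φ φh ↔
    ((∀ j : ℕ, 1 ≤ j → j ≤ 2 * d - 1 → a ≠ a' * q ^ (2 * (d : ℤ) - 2 * (j : ℤ))) ∧
     (∀ j : ℕ, 1 ≤ j → j ≤ 2 * d - 1 → b ≠ b' * q ^ (2 * (d : ℤ) - 2 * (j : ℤ))) ∧
     (∀ j : ℕ, 1 ≤ j → j ≤ d →
       b * c⁻¹ ≠ a * q ^ ((d : ℤ) - 2 * (j : ℤ) + 1) ∧
       b * c⁻¹ ≠ a' * q ^ ((d : ℤ) - 2 * (j : ℤ) + 1) ∧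
       b' * c⁻¹ ≠ a * q ^ ((d : ℤ) - 2 * (j : ℤ) + 1) ∧
       b' * c⁻¹ ≠ a' * q ^ ((d : ℤ) - 2 * (j : ℤ) + 1))) := by
  have hone : ∀ m : ℤ, m ≠ 0 → q ^ m ≠ 1 := aux_zpow_ne_one hq hqru
  have hne : ∀ x y : ℤ, x ≠ y → q ^ x ≠ q ^ y := aux_zpow_inj hq hqru
  have h2 : ∀ x : ℤ, q ^ (2 * x) = (q ^ x) ^ 2 := by
    intro x; rw [two_mul, zpow_add₀ hq, sq]
  have tdiff : ∀ i j : ℕ, i ≤ d → j ≤ d → θ i - θ j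
      = (q ^ (2*(i:ℤ)-(d:ℤ)) - q ^ (2*(j:ℤ)-(d:ℤ)))
          * (a - a' * q ^ (2*(d:ℤ)-2*((i:ℤ)+(j:ℤ)))) := by
    intro i j hi hj
    rw [hθ i hi, hθ j hj]; exact aux_tdiff hq d α a a' i j
  have tsdiff : ∀ i j : ℕ, i ≤ d → j ≤ d → θs i - θs j
      = (q ^ (2*(i:ℤ)-(d:ℤ)) - q ^ (2*(j:ℤ)-(d:ℤ)))
          * (b - b' * q ^ (2*(d:ℤ)-2*((i:ℤ)+(j:ℤ)))) := by
    intro i j hi hj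
    rw [hθs i hi, hθs j hj]; exact aux_tdiff hq d αs b b' i j
  constructor
  · rintro ⟨h1, h2', -, -, -, -⟩
    refine ⟨?_, ?_, ?_⟩
    · -- C1 from distinctness of θ
      intro j hj1 hj2 hcon
      by_cases hjd : j ≤ d
      · apply (h1 0 j (Nat.zero_le d) hjd (by omega)).1
        have e := tdiff 0 j (Nat.zero_le d) hjd
        rw [show (2*(d:ℤ)-2*(((0:ℕ):ℤ)+((j:ℕ):ℤ))) = 2*(d:ℤ)-2*(j:ℤ) by push_cast; ring,
          ← hcon, sub_self, mul_zero] at e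
        exact sub_eq_zero.mp e
      · apply (h1 (j-d) d (by omega) le_rfl (by omega)).1
        have e := tdiff (j-d) d (by omega) le_rfl
        rw [show (2*(d:ℤ)-2*(((j-d:ℕ):ℤ)+((d:ℕ):ℤ))) = 2*(d:ℤ)-2*(j:ℤ) by omega,
          ← hcon, sub_self, mul_zero] at e
        exact sub_eq_zero.mp e
    · -- C2 from distinctness of θs
      intro j hj1 hj2 hcon
      by_cases hjd : j ≤ d
      · apply (h1 0 j (Nat.zero_le d) hjd (by omega)).2
        have e := tsdiff 0 j (Nat.zero_le d) hjd
        rw [show (2*(d:ℤ)-2*(((0:ℕ):ℤ)+((j:ℕ):ℤ))) = 2*(d:ℤ)-2*(j:ℤ) by push_cast; ring,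
          ← hcon, sub_self, mul_zero] at e
        exact sub_eq_zero.mp e
      · apply (h1 (j-d) d (by omega) le_rfl (by omega)).2
        have e := tsdiff (j-d) d (by omega) le_rfl
        rw [show (2*(d:ℤ)-2*(((j-d:ℕ):ℤ)+((d:ℕ):ℤ))) = 2*(d:ℤ)-2*(j:ℤ) by omega,
          ← hcon, sub_self, mul_zero] at e
        exact sub_eq_zero.mp e
    · -- C3 from nonvanishing of φ, φ̂
      intro j hj1 hjd
      have hk1 : 1 ≤ d - j + 1 := by omega
      have hkd : d - j + 1 ≤ d := by omega
      refine ⟨?_, ?_, ?_, ?_⟩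
      · intro hcon
        apply (h2' j hj1 hjd).2
        rw [hφh j hj1 hjd,
          show b - a * c * q ^ ((d:ℤ)-2*(j:ℤ)+1) = 0 by
            rw [show a * c * q ^ ((d:ℤ)-2*(j:ℤ)+1) = a * q ^ ((d:ℤ)-2*(j:ℤ)+1) * c by ring,
              ← hcon]; field_simp; ring]
        ring
      · intro hcon
        apply (h2' j hj1 hjd).1
        rw [hφ j hj1 hjd,
          show b - a' * c * q ^ ((d:ℤ)-2*(j:ℤ)+1) = 0 by
            rw [show a' * c * q ^ ((d:ℤ)-2*(j:ℤ)+1) = a' * q ^ ((d:ℤ)-2*(j:ℤ)+1) * c by ring,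
              ← hcon]; field_simp; ring]
        ring
      · intro hcon
        apply (h2' (d-j+1) hk1 hkd).1
        rw [hφ (d-j+1) hk1 hkd,
          show b' - a * c * q ^ (2*((d-j+1:ℕ):ℤ)-(d:ℤ)-1) = 0 by
            rw [show (2*((d-j+1:ℕ):ℤ)-(d:ℤ)-1) = ((d:ℤ)-2*(j:ℤ)+1) by omega,
              show a * c * q ^ ((d:ℤ)-2*(j:ℤ)+1) = a * q ^ ((d:ℤ)-2*(j:ℤ)+1) * c by ring,
              ← hcon]; field_simp; ring]
        ring
      · intro hcon
        apply (h2' (d-j+1) hk1 hkd).2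
        rw [hφh (d-j+1) hk1 hkd,
          show b' - a' * c * q ^ (2*((d-j+1:ℕ):ℤ)-(d:ℤ)-1) = 0 by
            rw [show (2*((d-j+1:ℕ):ℤ)-(d:ℤ)-1) = ((d:ℤ)-2*(j:ℤ)+1) by omega,
              show a' * c * q ^ ((d:ℤ)-2*(j:ℤ)+1) = a' * q ^ ((d:ℤ)-2*(j:ℤ)+1) * c by ring,
              ← hcon]; field_simp; ring]
        ring
  · rintro ⟨hC1, hC2, hC3⟩
    have hInj : ∀ i j : ℕ, i ≤ d → j ≤ d → i ≠ j → θ i ≠ θ j ∧ θs i ≠ θs j := by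
      intro i j hi hj hij
      have hfac : q ^ (2*(i:ℤ)-(d:ℤ)) - q ^ (2*(j:ℤ)-(d:ℤ)) ≠ 0 :=
        sub_ne_zero.mpr (hne _ _ (by omega))
      have hz1 : a - a' * q ^ (2*(d:ℤ)-2*((i:ℤ)+(j:ℤ))) ≠ 0 := by
        have h := hC1 (i+j) (by omega) (by omega)
        rw [show ((i+j:ℕ):ℤ) = (i:ℤ)+(j:ℤ) by push_cast; ring] at h
        exact sub_ne_zero.mpr h
      have hz2 : b - b' * q ^ (2*(d:ℤ)-2*((i:ℤ)+(j:ℤ))) ≠ 0 := by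
        have h := hC2 (i+j) (by omega) (by omega)
        rw [show ((i+j:ℕ):ℤ) = (i:ℤ)+(j:ℤ) by push_cast; ring] at h
        exact sub_ne_zero.mpr h
      constructor
      · refine fun he => (mul_ne_zero hfac hz1) ?_
        rw [← tdiff i j hi hj, he, sub_self]
      · refine fun he => (mul_ne_zero hfac hz2) ?_
        rw [← tsdiff i j hi hj, he, sub_self]
    have hphine : ∀ i : ℕ, 1 ≤ i → i ≤ d → φ i ≠ 0 ∧ φh i ≠ 0 := by
      intro i h1i hid
      have f1 : q ^ ((i:ℕ):ℤ) - q ^ (-((i:ℕ):ℤ)) ≠ 0 :=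
        sub_ne_zero.mpr (hne _ _ (by omega))
      have f2 : q ^ ((d:ℤ)-(i:ℤ)+1) - q ^ ((i:ℤ)-(d:ℤ)-1) ≠ 0 :=
        sub_ne_zero.mpr (hne _ _ (by omega))
      have f3 : b - a' * c * q ^ ((d:ℤ)-2*(i:ℤ)+1) ≠ 0 := by
        refine sub_ne_zero.mpr fun he => (hC3 i h1i hid).2.1 ?_
        rw [he, show a' * c * q ^ ((d:ℤ)-2*(i:ℤ)+1) * c⁻¹
          = a' * q ^ ((d:ℤ)-2*(i:ℤ)+1) * (c * c⁻¹) by ring, mul_inv_cancel₀ hc, mul_one]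
      have f3' : b - a * c * q ^ ((d:ℤ)-2*(i:ℤ)+1) ≠ 0 := by
        refine sub_ne_zero.mpr fun he => (hC3 i h1i hid).1 ?_
        rw [he, show a * c * q ^ ((d:ℤ)-2*(i:ℤ)+1) * c⁻¹
          = a * q ^ ((d:ℤ)-2*(i:ℤ)+1) * (c * c⁻¹) by ring, mul_inv_cancel₀ hc, mul_one]
      have f4 : b' - a * c * q ^ (2*(i:ℤ)-(d:ℤ)-1) ≠ 0 := by
        refine sub_ne_zero.mpr fun he => (hC3 (d-i+1) (by omega) (by omega)).2.2.1 ?_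
        rw [show ((d:ℤ)-2*((d-i+1:ℕ):ℤ)+1) = 2*(i:ℤ)-(d:ℤ)-1 by omega,
          he, show a * c * q ^ (2*(i:ℤ)-(d:ℤ)-1) * c⁻¹
          = a * q ^ (2*(i:ℤ)-(d:ℤ)-1) * (c * c⁻¹) by ring, mul_inv_cancel₀ hc, mul_one]
      have f4' : b' - a' * c * q ^ (2*(i:ℤ)-(d:ℤ)-1) ≠ 0 := by
        refine sub_ne_zero.mpr fun he => (hC3 (d-i+1) (by omega) (by omega)).2.2.2 ?_
        rw [show ((d:ℤ)-2*((d-i+1:ℕ):ℤ)+1) = 2*(i:ℤ)-(d:ℤ)-1 by omega,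
          he, show a' * c * q ^ (2*(i:ℤ)-(d:ℤ)-1) * c⁻¹
          = a' * q ^ (2*(i:ℤ)-(d:ℤ)-1) * (c * c⁻¹) by ring, mul_inv_cancel₀ hc, mul_one]
      constructor
      · rw [hφ i h1i hid]
        exact mul_ne_zero (mul_ne_zero (mul_ne_zero (mul_ne_zero f1 f2) f3) f4)
          (inv_ne_zero hc)
      · rw [hφh i h1i hid]
        exact mul_ne_zero (mul_ne_zero (mul_ne_zero (mul_ne_zero f1 f2) f3') f4')
          (inv_ne_zero hc)
    have hQ2 : q ^ 2 - 1 ≠ 0 := sub_ne_zero.mpr (hqru 2 (by norm_num))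
    have hVne : q ^ (d:ℤ) ≠ 0 := zpow_ne_zero _ hq
    have hV2 : 1 - (q ^ (d:ℤ)) ^ 2 ≠ 0 := by
      intro he
      apply hone (2*(d:ℤ)) (by omega)
      rw [h2]; exact (sub_eq_zero.mp he).symm
    have ha : a - a' ≠ 0 := by
      have h := hC1 d (by omega) (by omega)
      rw [show (2*(d:ℤ)-2*((d:ℕ):ℤ)) = 0 by push_cast; ring, zpow_zero, mul_one] at h
      exact sub_ne_zero.mpr h
    have hsum : ∀ i : ℕ, i ≤ d →
        (∑ h ∈ Finset.range i, (θ h - θ (d - h)) / (θ 0 - θ d))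
        = ((q ^ (i:ℤ)) ^ 2 - 1) * ((q ^ (i:ℤ)) ^ 2 - (q ^ (d:ℤ)) ^ 2 * q ^ 2)
            / ((q ^ 2 - 1) * (q ^ (i:ℤ)) ^ 2 * (1 - (q ^ (d:ℤ)) ^ 2)) := by
      intro i hid
      have hUne : q ^ (i:ℤ) ≠ 0 := zpow_ne_zero _ hq
      have e0 : θ 0 - θ d = ((q ^ (d:ℤ))⁻¹ - q ^ (d:ℤ)) * (a - a') := by
        have e := tdiff 0 d (Nat.zero_le d) le_rfl
        rw [show (2*((0:ℕ):ℤ)-(d:ℤ)) = -(d:ℤ) by push_cast; ring,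
          show (2*((d:ℕ):ℤ)-(d:ℤ)) = (d:ℤ) by push_cast; ring,
          show (2*(d:ℤ)-2*(((0:ℕ):ℤ)+((d:ℕ):ℤ))) = 0 by push_cast; ring,
          zpow_zero, mul_one, zpow_neg] at e
        exact e
      have hterm : ∀ h : ℕ, h ∈ Finset.range i →
          (θ h - θ (d - h)) / (θ 0 - θ d)
          = (q ^ (2*(h:ℤ)-(d:ℤ)) - q ^ ((d:ℤ)-2*(h:ℤ))) / ((q ^ (d:ℤ))⁻¹ - q ^ (d:ℤ)) := by
        intro h hh
        have hhi : h < i := Finset.mem_range.mp hh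
        have e := tdiff h (d-h) (by omega) (by omega)
        rw [show (2*((d-h:ℕ):ℤ)-(d:ℤ)) = (d:ℤ)-2*(h:ℤ) by omega,
          show (2*(d:ℤ)-2*((h:ℤ)+((d-h:ℕ):ℤ))) = 0 by omega,
          zpow_zero, mul_one] at e
        rw [e, e0, mul_div_mul_right _ _ ha]
      rw [Finset.sum_congr rfl hterm, ← Finset.sum_div,
        (eq_div_iff (mul_ne_zero (mul_ne_zero hQ2 (pow_ne_zero 2 hUne)) hVne)).mpr
          (aux_sumpow_mul hq d i),
        div_div]
      congr 1
      field_simp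
    have hnum : ∀ (y x x' : F) (th : ℕ → F),
        (∀ m : ℕ, m ≤ d → th m = y + x * q ^ (2*(m:ℤ)-(d:ℤ)) + x' * q ^ ((d:ℤ)-2*(m:ℤ))) →
        ∀ i : ℕ, 2 ≤ i → i ≤ d - 1 →
        th (i-2) - th (i+1) = (q^4+q^2+1)/q^2 * (th (i-1) - th i) := by
      intro y x x' th hth i h2i hi1
      rw [hth (i-2) (by omega), hth (i+1) (by omega), hth (i-1) (by omega), hth i (by omega),
        show q ^ (2*((i-2:ℕ):ℤ)-(d:ℤ)) = q ^ (2*(i:ℤ)-(d:ℤ)) / q^4 by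
          rw [show (2*((i-2:ℕ):ℤ)-(d:ℤ)) = (2*(i:ℤ)-(d:ℤ)) - ((4:ℕ):ℤ) by omega,
            zpow_sub₀ hq, zpow_natCast],
        show q ^ ((d:ℤ)-2*((i-2:ℕ):ℤ)) = q ^ ((d:ℤ)-2*(i:ℤ)) * q^4 by
          rw [show ((d:ℤ)-2*((i-2:ℕ):ℤ)) = ((d:ℤ)-2*(i:ℤ)) + ((4:ℕ):ℤ) by omega,
            zpow_add₀ hq, zpow_natCast],
        show q ^ (2*((i+1:ℕ):ℤ)-(d:ℤ)) = q ^ (2*(i:ℤ)-(d:ℤ)) * q^2 by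
          rw [show (2*((i+1:ℕ):ℤ)-(d:ℤ)) = (2*(i:ℤ)-(d:ℤ)) + ((2:ℕ):ℤ) by omega,
            zpow_add₀ hq, zpow_natCast],
        show q ^ ((d:ℤ)-2*((i+1:ℕ):ℤ)) = q ^ ((d:ℤ)-2*(i:ℤ)) / q^2 by
          rw [show ((d:ℤ)-2*((i+1:ℕ):ℤ)) = ((d:ℤ)-2*(i:ℤ)) - ((2:ℕ):ℤ) by omega,
            zpow_sub₀ hq, zpow_natCast],
        show q ^ (2*((i-1:ℕ):ℤ)-(d:ℤ)) = q ^ (2*(i:ℤ)-(d:ℤ)) / q^2 by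
          rw [show (2*((i-1:ℕ):ℤ)-(d:ℤ)) = (2*(i:ℤ)-(d:ℤ)) - ((2:ℕ):ℤ) by omega,
            zpow_sub₀ hq, zpow_natCast],
        show q ^ ((d:ℤ)-2*((i-1:ℕ):ℤ)) = q ^ ((d:ℤ)-2*(i:ℤ)) * q^2 by
          rw [show ((d:ℤ)-2*((i-1:ℕ):ℤ)) = ((d:ℤ)-2*(i:ℤ)) + ((2:ℕ):ℤ) by omega,
            zpow_add₀ hq, zpow_natCast]]
      field_simp
      ring
    have hrat : ∀ i : ℕ, 2 ≤ i → i ≤ d - 1 →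
        (θ (i-2) - θ (i+1)) / (θ (i-1) - θ i) = (q^4+q^2+1)/q^2 := by
      intro i h2i hi1
      have hden : θ (i-1) - θ i ≠ 0 :=
        sub_ne_zero.mpr ((hInj (i-1) i (by omega) (by omega) (by omega)).1)
      rw [hnum α a a' θ hθ i h2i hi1, mul_div_assoc, div_self hden, mul_one]
    have hrats : ∀ i : ℕ, 2 ≤ i → i ≤ d - 1 →
        (θs (i-2) - θs (i+1)) / (θs (i-1) - θs i) = (q^4+q^2+1)/q^2 := by
      intro i h2i hi1
      have hden : θs (i-1) - θs i ≠ 0 :=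
        sub_ne_zero.mpr ((hInj (i-1) i (by omega) (by omega) (by omega)).2)
      rw [hnum αs b b' θs hθs i h2i hi1, mul_div_assoc, div_self hden, mul_one]
    refine ⟨hInj, hphine, ?_, ?_,
      fun i h2i hi1 => (hrat i h2i hi1).trans (hrats i h2i hi1).symm,
      fun i j h2i hi1 h2j hj1 => (hrat i h2i hi1).trans (hrat j h2j hj1).symm⟩
    · -- condition (iii)
      intro i h1i hid
      have hUne : q ^ (i:ℤ) ≠ 0 := zpow_ne_zero _ hq
      rw [hsum i hid, hφ i h1i hid, hφh 1 le_rfl (by omega), hθs i hid, hθs 0 (Nat.zero_le d),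
        hθ (i-1) (by omega), hθ d le_rfl]
      rw [show q ^ (-((i:ℕ):ℤ)) = (q ^ ((i:ℕ):ℤ))⁻¹ from zpow_neg q _,
        show q ^ ((d:ℤ)-(i:ℤ)+1) = q ^ (d:ℤ) / q ^ (i:ℤ) * q by
          rw [zpow_add₀ hq, zpow_sub₀ hq, zpow_one],
        show q ^ ((i:ℤ)-(d:ℤ)-1) = q ^ (i:ℤ) / q ^ (d:ℤ) / q by
          rw [zpow_sub₀ hq, zpow_sub₀ hq, zpow_one],
        show q ^ ((d:ℤ)-2*(i:ℤ)+1) = q ^ (d:ℤ) / (q ^ (i:ℤ))^2 * q by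
          rw [zpow_add₀ hq, zpow_sub₀ hq, h2, zpow_one],
        show q ^ (2*(i:ℤ)-(d:ℤ)-1) = (q ^ (i:ℤ))^2 / q ^ (d:ℤ) / q by
          rw [zpow_sub₀ hq, zpow_sub₀ hq, h2, zpow_one],
        show q ^ (((1:ℕ)):ℤ) = q by norm_num,
        show q ^ (-((1:ℕ):ℤ)) = q⁻¹ by norm_num,
        show q ^ ((d:ℤ)-((1:ℕ):ℤ)+1) = q ^ (d:ℤ) / q * q by
          rw [zpow_add₀ hq, zpow_sub₀ hq, show q ^ (((1:ℕ)):ℤ) = q from by norm_num, zpow_one],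
        show q ^ (((1:ℕ):ℤ)-(d:ℤ)-1) = q / q ^ (d:ℤ) / q by
          rw [zpow_sub₀ hq, zpow_sub₀ hq, show q ^ (((1:ℕ)):ℤ) = q from by norm_num, zpow_one],
        show q ^ ((d:ℤ)-2*((1:ℕ):ℤ)+1) = q ^ (d:ℤ) / q^2 * q by
          rw [zpow_add₀ hq, zpow_sub₀ hq, h2, show q ^ (((1:ℕ)):ℤ) = q from by norm_num, zpow_one],
        show q ^ (2*((1:ℕ):ℤ)-(d:ℤ)-1) = q^2 / q ^ (d:ℤ) / q by
          rw [zpow_sub₀ hq, zpow_sub₀ hq, h2, show q ^ (((1:ℕ)):ℤ) = q from by norm_num, zpow_one],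
        show q ^ (2*((i-1:ℕ):ℤ)-(d:ℤ)) = (q ^ (i:ℤ) / q)^2 / q ^ (d:ℤ) by
          rw [show (2*((i-1:ℕ):ℤ)-(d:ℤ)) = 2*((i:ℤ)-1)-(d:ℤ) by omega,
            zpow_sub₀ hq, h2, zpow_sub₀ hq, zpow_one],
        show q ^ ((d:ℤ)-2*((i-1:ℕ):ℤ)) = q ^ (d:ℤ) / (q ^ (i:ℤ) / q)^2 by
          rw [show ((d:ℤ)-2*((i-1:ℕ):ℤ)) = (d:ℤ)-2*((i:ℤ)-1) by omega,
            zpow_sub₀ hq, h2, zpow_sub₀ hq, zpow_one],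
        show q ^ (2*((d:ℕ):ℤ)-(d:ℤ)) = q ^ (d:ℤ) by
          rw [show (2*((d:ℕ):ℤ)-(d:ℤ)) = (d:ℤ) by push_cast; ring],
        show q ^ ((d:ℤ)-2*((d:ℕ):ℤ)) = (q ^ (d:ℤ))⁻¹ by
          rw [show ((d:ℤ)-2*((d:ℕ):ℤ)) = -(d:ℤ) by push_cast; ring, zpow_neg],
        show q ^ (2*((0:ℕ):ℤ)-(d:ℤ)) = (q ^ (d:ℤ))⁻¹ by
          rw [show (2*((0:ℕ):ℤ)-(d:ℤ)) = -(d:ℤ) by push_cast; ring, zpow_neg],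
        show q ^ ((d:ℤ)-2*((0:ℕ):ℤ)) = q ^ (d:ℤ) by
          rw [show ((d:ℤ)-2*((0:ℕ):ℤ)) = (d:ℤ) by push_cast; ring],
        show q ^ (2*(i:ℤ)-(d:ℤ)) = (q ^ (i:ℤ))^2 / q ^ (d:ℤ) by rw [zpow_sub₀ hq, h2],
        show q ^ ((d:ℤ)-2*(i:ℤ)) = q ^ (d:ℤ) / (q ^ (i:ℤ))^2 by rw [zpow_sub₀ hq, h2]]
      have hD : (q ^ 2 - 1) * (q ^ (i:ℤ)) ^ 2 * (1 - (q ^ (d:ℤ)) ^ 2) ≠ 0 :=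
        mul_ne_zero (mul_ne_zero hQ2 (pow_ne_zero 2 hUne)) hV2
      have hx : ∀ X Y : F, X * (Y / ((q ^ 2 - 1) * (q ^ (i:ℤ)) ^ 2 * (1 - (q ^ (d:ℤ)) ^ 2)))
          = X * Y / ((q ^ 2 - 1) * (q ^ (i:ℤ)) ^ 2 * (1 - (q ^ (d:ℤ)) ^ 2)) :=
        fun X Y => (mul_div_assoc _ _ _).symm
      rw [← sub_eq_iff_eq_add, hx, eq_div_iff hD]
      field_simp
      have hM1 : q ^ i * (q ^ i * (q ^ d * q)) * (q ^ i) ^ 2 * (q ^ d * q) * c ≠ 0 := by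
        apply_rules [mul_ne_zero, pow_ne_zero]
      have hM2 : q ^ d * (q ^ i) ^ 2 * q ^ d * (q ^ 2 * q ^ d * (q ^ i) ^ 2 * q ^ d) ≠ 0 := by
        apply_rules [mul_ne_zero, pow_ne_zero]
      have hM3 : q * (q ^ d * q) * q ^ 2 * (q ^ d * q) * c ≠ 0 := by
        apply_rules [mul_ne_zero, pow_ne_zero]
      ring
    · -- condition (iv)
      intro i h1i hid
      have hUne : q ^ (i:ℤ) ≠ 0 := zpow_ne_zero _ hq
      rw [hsum i hid, hφh i h1i hid, hφ 1 le_rfl (by omega), hθs i hid, hθs 0 (Nat.zero_le d),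
        hθ (d-i+1) (by omega), hθ 0 (Nat.zero_le d)]
      rw [show q ^ (-((i:ℕ):ℤ)) = (q ^ ((i:ℕ):ℤ))⁻¹ from zpow_neg q _,
        show q ^ ((d:ℤ)-(i:ℤ)+1) = q ^ (d:ℤ) / q ^ (i:ℤ) * q by
          rw [zpow_add₀ hq, zpow_sub₀ hq, zpow_one],
        show q ^ ((i:ℤ)-(d:ℤ)-1) = q ^ (i:ℤ) / q ^ (d:ℤ) / q by
          rw [zpow_sub₀ hq, zpow_sub₀ hq, zpow_one],
        show q ^ ((d:ℤ)-2*(i:ℤ)+1) = q ^ (d:ℤ) / (q ^ (i:ℤ))^2 * q by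
          rw [zpow_add₀ hq, zpow_sub₀ hq, h2, zpow_one],
        show q ^ (2*(i:ℤ)-(d:ℤ)-1) = (q ^ (i:ℤ))^2 / q ^ (d:ℤ) / q by
          rw [zpow_sub₀ hq, zpow_sub₀ hq, h2, zpow_one],
        show q ^ (((1:ℕ)):ℤ) = q by norm_num,
        show q ^ (-((1:ℕ):ℤ)) = q⁻¹ by norm_num,
        show q ^ ((d:ℤ)-((1:ℕ):ℤ)+1) = q ^ (d:ℤ) / q * q by
          rw [zpow_add₀ hq, zpow_sub₀ hq, show q ^ (((1:ℕ)):ℤ) = q from by norm_num, zpow_one],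
        show q ^ (((1:ℕ):ℤ)-(d:ℤ)-1) = q / q ^ (d:ℤ) / q by
          rw [zpow_sub₀ hq, zpow_sub₀ hq, show q ^ (((1:ℕ)):ℤ) = q from by norm_num, zpow_one],
        show q ^ ((d:ℤ)-2*((1:ℕ):ℤ)+1) = q ^ (d:ℤ) / q^2 * q by
          rw [zpow_add₀ hq, zpow_sub₀ hq, h2, show q ^ (((1:ℕ)):ℤ) = q from by norm_num, zpow_one],
        show q ^ (2*((1:ℕ):ℤ)-(d:ℤ)-1) = q^2 / q ^ (d:ℤ) / q by
          rw [zpow_sub₀ hq, zpow_sub₀ hq, h2, show q ^ (((1:ℕ)):ℤ) = q from by norm_num, zpow_one],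
        show q ^ (2*((d-i+1:ℕ):ℤ)-(d:ℤ)) = (q ^ (d:ℤ) / q ^ (i:ℤ) * q)^2 / q ^ (d:ℤ) by
          rw [show (2*((d-i+1:ℕ):ℤ)-(d:ℤ)) = 2*((d:ℤ)-(i:ℤ)+1)-(d:ℤ) by omega,
            zpow_sub₀ hq, h2, zpow_add₀ hq, zpow_sub₀ hq, zpow_one],
        show q ^ ((d:ℤ)-2*((d-i+1:ℕ):ℤ)) = q ^ (d:ℤ) / (q ^ (d:ℤ) / q ^ (i:ℤ) * q)^2 by
          rw [show ((d:ℤ)-2*((d-i+1:ℕ):ℤ)) = (d:ℤ)-2*((d:ℤ)-(i:ℤ)+1) by omega,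
            zpow_sub₀ hq, h2, zpow_add₀ hq, zpow_sub₀ hq, zpow_one],
        show q ^ (2*((0:ℕ):ℤ)-(d:ℤ)) = (q ^ (d:ℤ))⁻¹ by
          rw [show (2*((0:ℕ):ℤ)-(d:ℤ)) = -(d:ℤ) by push_cast; ring, zpow_neg],
        show q ^ ((d:ℤ)-2*((0:ℕ):ℤ)) = q ^ (d:ℤ) by
          rw [show ((d:ℤ)-2*((0:ℕ):ℤ)) = (d:ℤ) by push_cast; ring],
        show q ^ (2*(i:ℤ)-(d:ℤ)) = (q ^ (i:ℤ))^2 / q ^ (d:ℤ) by rw [zpow_sub₀ hq, h2],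
        show q ^ ((d:ℤ)-2*(i:ℤ)) = q ^ (d:ℤ) / (q ^ (i:ℤ))^2 by rw [zpow_sub₀ hq, h2]]
      have hD : (q ^ 2 - 1) * (q ^ (i:ℤ)) ^ 2 * (1 - (q ^ (d:ℤ)) ^ 2) ≠ 0 :=
        mul_ne_zero (mul_ne_zero hQ2 (pow_ne_zero 2 hUne)) hV2
      have hx : ∀ X Y : F, X * (Y / ((q ^ 2 - 1) * (q ^ (i:ℤ)) ^ 2 * (1 - (q ^ (d:ℤ)) ^ 2)))
          = X * Y / ((q ^ 2 - 1) * (q ^ (i:ℤ)) ^ 2 * (1 - (q ^ (d:ℤ)) ^ 2)) :=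
        fun X Y => (mul_div_assoc _ _ _).symm
      rw [← sub_eq_iff_eq_add, hx, eq_div_iff hD]
      field_simp
      have hM1 : q ^ i * (q ^ i * (q ^ d * q)) * (q ^ i) ^ 2 * (q ^ d * q) * c ≠ 0 := by
        apply_rules [mul_ne_zero, pow_ne_zero]
      have hM2 : q ^ d * (q ^ i) ^ 2 * q ^ d * ((q ^ i) ^ 2 * q ^ d * (q ^ d * q) ^ 2 * q ^ d) ≠ 0 := by
        apply_rules [mul_ne_zero, pow_ne_zero]
      have hM3 : q * (q ^ d * q) * q ^ 2 * (q ^ d * q) * c ≠ 0 := by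
        apply_rules [mul_ne_zero, pow_ne_zero]
      ring
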